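/- If U follows a chi-squared distribution with r degrees of freedom, then for any x > 0, P(U - r ≥ 2√(rx) + 2x) ≤ exp(-x). -/

import Mathlib

open MeasureTheory ProbabilityTheory Real Set

lemma gamma_exp_lintegral {a b t : ℝ} (ha : 0 < a) (ht : 0 < t) (htb : t < b) :
    ∫⁻ y, ENNReal.ofReal (Real.exp (t * y)) ∂(gammaMeasure a b) =
      ENNReal.ofReal ((b / (b - t)) ^ a) := by
  have hb : 0 < b := ht.trans htb
  have hbt : 0 < b - t := by linarith
  have hm2 : Measurable (gammaPDF a (b - t)) := (measurable_gammaPDFReal a (b - t)).ennreal_ofReal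
  have hm : Measurable (gammaPDF a b) := (measurable_gammaPDFReal a b).ennreal_ofReal
  rw [gammaMeasure, lintegral_withDensity_eq_lintegral_mul _ hm ((measurable_const_mul t).exp.ennreal_ofReal)]
  have key : ∀ y : ℝ, (gammaPDF a b * fun y => ENNReal.ofReal (Real.exp (t * y))) y
      = ENNReal.ofReal ((b / (b - t)) ^ a) * gammaPDF a (b - t) y := by
    intro y
    simp only [Pi.mul_apply]
    rcases lt_or_ge y 0 with hy | hy
    · rw [gammaPDF_of_neg hy, gammaPDF_of_neg hy]; simp
    · rw [gammaPDF_of_nonneg hy, gammaPDF_of_nonneg hy,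
        ← ENNReal.ofReal_mul (by positivity), ← ENNReal.ofReal_mul (by positivity)]
      congr 1
      have h1 : b ^ a = (b / (b - t)) ^ a * (b - t) ^ a := by
        rw [← Real.mul_rpow (by positivity) hbt.le, div_mul_cancel₀ _ hbt.ne']
      have h2 : Real.exp (-((b - t) * y)) = Real.exp (-(b * y)) * Real.exp (t * y) := by
        rw [← Real.exp_add]; ring_nf
      rw [h1, h2]; ring
  rw [lintegral_congr key, lintegral_const_mul _ hm2,
    lintegral_gammaPDF_eq_one ha hbt, mul_one]

/-- Laurent–Massart tail bound: if `U` is chi-squared with `r` degrees of freedom, then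
for any `x > 0`, `P(U - r ≥ 2√(rx) + 2x) ≤ exp (-x)`. -/
theorem chiSq_laurent_massart_tail
    {Ω : Type*} [MeasurableSpace Ω] (P : Measure Ω) [IsProbabilityMeasure P]
    (U : Ω → ℝ) (hmeas : Measurable U) (r : ℕ)
    (hU : Measure.map U P = gammaMeasure (r / 2 : ℝ) (1 / 2 : ℝ))
    (x : ℝ) (hx : 0 < x) :
    P {ω | (r : ℝ) + 2 * Real.sqrt (r * x) + 2 * x ≤ U ω}
      ≤ ENNReal.ofReal (Real.exp (-x)) := by
  rcases Nat.eq_zero_or_pos r with hr0 | hrpos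
  · exfalso
    have hmap : IsProbabilityMeasure (Measure.map U P) :=
      Measure.isProbabilityMeasure_map hmeas.aemeasurable
    have h1 : (Measure.map U P) univ = 1 := measure_univ
    rw [hU, hr0] at h1
    have hpdf : gammaPDF ((0:ℕ) / 2 : ℝ) (1/2) = fun _ => 0 := by
      funext y
      simp [gammaPDF_eq, Real.Gamma_zero]
    rw [gammaMeasure, hpdf] at h1
    simp at h1
  -- main case
  have hrr : (0:ℝ) < r := by exact_mod_cast hrpos
  set rr : ℝ := (r : ℝ) with hrrdef
  set v : ℝ := Real.sqrt (rr * x) with hvdef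
  have hv : 0 ≤ v := Real.sqrt_nonneg _
  have hv2 : v ^ 2 = rr * x := Real.sq_sqrt (by positivity)
  set u : ℝ := 2 * v + 2 * x with hudef
  have hu : 0 < u := by positivity
  set s : ℝ := rr + u with hsdef
  have hs : 0 < s := by positivity
  set t : ℝ := u / (2 * s) with htdef
  have ht : 0 < t := by positivity
  have htb : t < 1 / 2 := by
    rw [htdef, div_lt_div_iff₀ (by positivity) (by positivity)]
    nlinarith
  have ha : (0:ℝ) < r / 2 := by positivity
  -- the set rewrite
  have hsetEq : {ω | (r : ℝ) + 2 * Real.sqrt (r * x) + 2 * x ≤ U ω}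
      = {ω | ENNReal.ofReal (Real.exp (t * s)) ≤ ENNReal.ofReal (Real.exp (t * U ω))} := by
    ext ω
    simp only [Set.mem_setOf_eq]
    rw [ENNReal.ofReal_le_ofReal_iff (Real.exp_pos _).le, Real.exp_le_exp,
      mul_le_mul_iff_right₀ ht]
    constructor <;> intro h <;> · rw [hsdef, hudef] at *; linarith
  have hfmeas : Measurable fun ω => ENNReal.ofReal (Real.exp (t * U ω)) :=
    ((hmeas.const_mul t).exp).ennreal_ofReal
  have markov := mul_meas_ge_le_lintegral₀ (μ := P) hfmeas.aemeasurable
    (ENNReal.ofReal (Real.exp (t * s)))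
  have hlint : ∫⁻ ω, ENNReal.ofReal (Real.exp (t * U ω)) ∂P
      = ENNReal.ofReal ((((1:ℝ)/2) / (1/2 - t)) ^ ((r:ℝ)/2)) := by
    rw [← lintegral_map ((measurable_const_mul t).exp).ennreal_ofReal hmeas, hU,
      gamma_exp_lintegral ha ht htb]
  rw [hlint] at markov
  have hPS : P {ω | (r : ℝ) + 2 * Real.sqrt (r * x) + 2 * x ≤ U ω}
      ≤ ENNReal.ofReal ((((1:ℝ)/2) / (1/2 - t)) ^ ((r:ℝ)/2)) / ENNReal.ofReal (Real.exp (t * s)) := by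
    rw [hsetEq, ENNReal.le_div_iff_mul_le (Or.inl (by simp [Real.exp_pos (t*s)]))
      (Or.inl ENNReal.ofReal_ne_top), mul_comm]
    exact markov
  refine hPS.trans ?_
  rw [← ENNReal.ofReal_div_of_pos (Real.exp_pos _)]
  apply ENNReal.ofReal_le_ofReal
  -- real inequality
  have hbt : (1:ℝ)/2 - t = rr / (2 * s) := by
    rw [htdef]; field_simp; rw [hsdef]; ring
  have hratio : ((1:ℝ)/2) / (1/2 - t) = s / rr := by
    rw [hbt]; field_simp
  have hts : t * s = u / 2 := by
    rw [htdef]; field_simp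
  set s₀ : ℝ := v / rr with hs₀def
  have hs₀ : 0 ≤ s₀ := by positivity
  have hsrr : s / rr = 1 + 2 * s₀ + 2 * s₀ ^ 2 := by
    rw [hs₀def, hsdef, hudef]
    field_simp
    nlinarith [hv2]
  have hquad : 1 + 2 * s₀ + 2 * s₀ ^ 2 ≤ Real.exp (2 * s₀) := by
    have := Real.quadratic_le_exp_of_nonneg (x := 2 * s₀) (by positivity)
    nlinarith [this]
  have hM : (s / rr) ^ ((r:ℝ)/2) ≤ Real.exp v := by
    rw [hsrr]
    calc (1 + 2 * s₀ + 2 * s₀ ^ 2) ^ ((r:ℝ)/2)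
        ≤ (Real.exp (2 * s₀)) ^ ((r:ℝ)/2) :=
          Real.rpow_le_rpow (by positivity) hquad (by positivity)
      _ = Real.exp (2 * s₀ * ((r:ℝ)/2)) := (Real.exp_mul _ _).symm
      _ = Real.exp v := by
          congr 1
          rw [hs₀def]
          field_simp
          rfl
  rw [hratio, hts, div_le_iff₀ (Real.exp_pos _), ← Real.exp_add]
  calc (s / rr) ^ ((r:ℝ)/2) ≤ Real.exp v := hM
    _ = Real.exp (-x + u / 2) := by congr 1; rw [hudef]; ring
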